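/- Let J ∈ ℝ^{n×n} be invertible and let G = J^{-1}. For a partition P of {1,…,n}, let J_k be the columns of J in block k and G_k the rows of G in block k. Then det(J^T J) = ∏_{k∈P} det(J_k^T J_k) if and only if det(G G^T) = ∏_{k∈P} det(G_k G_k^T). -/

import Mathlib

open Matrix

set_option linter.unusedSectionVars false


variable {m n : Type*} [Fintype m] [Fintype n] [DecidableEq m] [DecidableEq n]

/-- PD of a principal submatrix along an injective map. -/
lemma posDef_submatrix_of_injective {M : Matrix n n ℝ} (hM : M.PosDef)
    (e : m → n) (he : Function.Injective e) : (M.submatrix e e).PosDef := by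
  refine posDef_iff_dotProduct_mulVec.mpr ⟨hM.1.submatrix e, fun x hx => ?_⟩
  set y : n → ℝ := fun a => ∑ i, if e i = a then x i else 0 with hy
  have hyx : ∀ i, y (e i) = x i := by
    intro i
    simp only [hy]
    rw [Finset.sum_eq_single i]
    · simp
    · intro b _ hb; rw [if_neg (fun h => hb (he h))]
    · simp
  have hy0 : y ≠ 0 := by
    intro h
    apply hx
    funext i
    have := congrFun h (e i)
    simpa [hyx i] using this
  have expand : ∀ g : n → ℝ, ∑ a, y a * g a = ∑ i, x i * g (e i) := by
    intro g
    simp only [hy, Finset.sum_mul, ite_mul, zero_mul]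
    rw [Finset.sum_comm]
    refine Finset.sum_congr rfl fun i _ => ?_
    rw [Finset.sum_eq_single (e i)]
    · simp
    · intro b _ hb; rw [if_neg (fun h => hb h.symm)]
    · simp
  have key : dotProduct (star y) (M *ᵥ y) = dotProduct (star x) ((M.submatrix e e) *ᵥ x) := by
    show ∑ a, y a * (M *ᵥ y) a = ∑ i, x i * ((M.submatrix e e) *ᵥ x) i
    rw [expand]
    refine Finset.sum_congr rfl fun i _ => ?_
    congr 1
    show ∑ b, M (e i) b * y b = _
    have : ∑ b, M (e i) b * y b = ∑ b, y b * M (e i) b := by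
      refine Finset.sum_congr rfl fun b _ => mul_comm _ _
    rw [this, expand]
    simp [mulVec, dotProduct, mul_comm]
  rw [← key]
  exact (posDef_iff_dotProduct_mulVec.mp hM).2 hy0

variable {n : Type*} [Fintype n] [DecidableEq n]

lemma psd_det_nonneg {M : Matrix n n ℝ} (hM : M.PosSemidef) : 0 ≤ M.det := by
  rw [hM.1.det_eq_prod_eigenvalues]
  exact Finset.prod_nonneg fun i _ => by
    simpa using hM.eigenvalues_nonneg i

open scoped MatrixOrder in
lemma posDef_of_posSemidef_det_ne_zero {M : Matrix n n ℝ} (hM : M.PosSemidef)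
    (hd : M.det ≠ 0) : M.PosDef := by
  obtain ⟨B, hB⟩ := CStarAlgebra.nonneg_iff_eq_star_mul_self.mp hM.nonneg
  rw [star_eq_conjTranspose] at hB
  subst hB
  have hB : IsUnit B.det := by
    rw [det_mul] at hd
    exact (IsUnit.mul_iff.mp (Ne.isUnit hd)).2
  have : Invertible B := B.invertibleOfIsUnitDet hB
  refine posDef_iff_dotProduct_mulVec.mpr ⟨hM.1, fun x hx => ?_⟩
  have hBx : B *ᵥ x ≠ 0 := by
    intro h
    apply hx
    have := congrArg (fun v => B⁻¹ *ᵥ v) h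
    simpa [mulVec_mulVec, nonsing_inv_mul B hB] using this
  have key : dotProduct (star x) ((Bᴴ * B) *ᵥ x) = dotProduct (B *ᵥ x) (B *ᵥ x) := by
    rw [← mulVec_mulVec, dotProduct_mulVec, ← star_mulVec]
    simp
  rw [key]
  have := (dotProduct_self_star_pos_iff (v := B *ᵥ x)).mpr hBx
  simpa using this

lemma one_le_det_one_add_psd {Q : Matrix n n ℝ} (hQ : Q.PosSemidef) :
    1 ≤ (1 + Q).det := by
  have h := hQ.1.spectral_theorem
  set U : Matrix n n ℝ := (hQ.1.eigenvectorUnitary : Matrix n n ℝ) with hUdef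
  have hU : U * star U = 1 := (Matrix.mem_unitaryGroup_iff).mp hQ.1.eigenvectorUnitary.2
  rw [RCLike.ofReal_real_eq_id, Unitary.conjStarAlgAut_apply] at h
  have h1 : (1 : Matrix n n ℝ) + Q
      = U * (diagonal (fun i => 1 + hQ.1.eigenvalues i)) * star U := by
    have e1 : (1 : Matrix n n ℝ) = U * 1 * star U := by rw [mul_one, hU]
    have e2 : (diagonal (fun i => 1 + hQ.1.eigenvalues i))
        = 1 + diagonal (id ∘ hQ.1.eigenvalues) := by
      rw [← diagonal_one, diagonal_add]
      rfl
    rw [e2, mul_add, add_mul, ← e1, ← h]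
  have hdetU : U.det * (star U).det = 1 := by rw [← det_mul, hU, det_one]
  rw [h1, det_mul, det_mul]
  have : U.det * (diagonal fun i => 1 + hQ.1.eigenvalues i).det * (star U).det
      = (diagonal fun i => 1 + hQ.1.eigenvalues i).det * (U.det * (star U).det) := by ring
  rw [this, hdetU, mul_one, det_diagonal]
  calc (1:ℝ) = ∏ _i : n, 1 := by simp
    _ ≤ ∏ i, (1 + hQ.1.eigenvalues i) :=
        Finset.prod_le_prod (fun _ _ => zero_le_one) fun i _ => by
          have := hQ.eigenvalues_nonneg i; linarith

open scoped MatrixOrder in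
lemma det_le_det_add_psd {S P : Matrix n n ℝ} (hS : S.PosSemidef) (hP : P.PosSemidef) :
    S.det ≤ (S + P).det := by
  rcases eq_or_ne S.det 0 with h0 | h0
  · rw [h0]; exact psd_det_nonneg (hS.add hP)
  have hSpd : S.PosDef := posDef_of_posSemidef_det_ne_zero hS h0
  set R := CFC.sqrt S with hR
  have hRps : R.PosSemidef := nonneg_iff_posSemidef.mp (CFC.sqrt_nonneg S)
  have hRR : R * R = S := CFC.sqrt_mul_sqrt_self S hS.nonneg
  have hdR : R.det ≠ 0 := by
    intro h
    apply h0
    rw [← hRR, det_mul, h, zero_mul]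
  have : Invertible R := R.invertibleOfIsUnitDet (Ne.isUnit hdR)
  have hQ : (R⁻¹ * P * R⁻¹).PosSemidef := by
    have := hP.conjTranspose_mul_mul_same R⁻¹
    rwa [show (R⁻¹)ᴴ = R⁻¹ from hRps.1.inv] at this
  have hsplit : S + P = R * (1 + R⁻¹ * P * R⁻¹) * R := by
    rw [mul_add, add_mul, mul_one, hRR]
    congr 1
    rw [mul_assoc, mul_assoc, mul_assoc, nonsing_inv_mul R (Ne.isUnit hdR), mul_one,
      ← mul_assoc, mul_nonsing_inv R (Ne.isUnit hdR), one_mul]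
  rw [hsplit, det_mul, det_mul]
  have h1 := one_le_det_one_add_psd hQ
  have hRpos : 0 < R.det := lt_of_le_of_ne (psd_det_nonneg hRps) (Ne.symm hdR)
  calc S.det = R.det * 1 * R.det := by
        rw [mul_one, ← det_mul, hRR]
    _ ≤ R.det * (1 + R⁻¹ * P * R⁻¹).det * R.det := by
        apply mul_le_mul_of_nonneg_right _ hRpos.le
        exact mul_le_mul_of_nonneg_left h1 hRpos.le

variable {m n : Type*} [Fintype m] [Fintype n] [DecidableEq m] [DecidableEq n]

lemma toBlocks11_eq (B : Matrix (m ⊕ n) (m ⊕ n) ℝ) :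
    B.toBlocks₁₁ = B.submatrix Sum.inl Sum.inl := rfl

lemma toBlocks22_eq (B : Matrix (m ⊕ n) (m ⊕ n) ℝ) :
    B.toBlocks₂₂ = B.submatrix Sum.inr Sum.inr := rfl

lemma fischer_two {B : Matrix (m ⊕ n) (m ⊕ n) ℝ} (hB : B.PosDef) :
    B.det ≤ B.toBlocks₁₁.det * B.toBlocks₂₂.det := by
  have hA11 : B.toBlocks₁₁.PosDef := by
    rw [toBlocks11_eq]
    exact posDef_submatrix_of_injective hB Sum.inl Sum.inl_injective
  have hA22 : B.toBlocks₂₂.PosDef := by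
    rw [toBlocks22_eq]
    exact posDef_submatrix_of_injective hB Sum.inr Sum.inr_injective
  haveI : Invertible B.toBlocks₁₁ := B.toBlocks₁₁.invertibleOfIsUnitDet hA11.det_pos.ne'.isUnit
  have hherm : B.toBlocks₂₁ = (B.toBlocks₁₂)ᴴ := by
    ext i j
    have := hB.1.apply (Sum.inr i) (Sum.inl j)
    simpa [toBlocks₂₁, toBlocks₁₂] using this.symm
  have hfb : B = fromBlocks B.toBlocks₁₁ B.toBlocks₁₂ (B.toBlocks₁₂)ᴴ B.toBlocks₂₂ := by
    rw [← hherm, fromBlocks_toBlocks]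
  have hdet : B.det = B.toBlocks₁₁.det *
      (B.toBlocks₂₂ - (B.toBlocks₁₂)ᴴ * ⅟B.toBlocks₁₁ * B.toBlocks₁₂).det := by
    conv_lhs => rw [hfb]
    rw [det_fromBlocks₁₁]
  have hSpsd : (B.toBlocks₂₂ - (B.toBlocks₁₂)ᴴ * B.toBlocks₁₁⁻¹ * B.toBlocks₁₂).PosSemidef := by
    rw [← PosDef.fromBlocks₁₁ _ _ hA11, ← hfb]
    exact hB.posSemidef
  have hPpsd : ((B.toBlocks₁₂)ᴴ * B.toBlocks₁₁⁻¹ * B.toBlocks₁₂).PosSemidef :=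
    hA11.inv.posSemidef.conjTranspose_mul_mul_same B.toBlocks₁₂
  have hle : (B.toBlocks₂₂ - (B.toBlocks₁₂)ᴴ * B.toBlocks₁₁⁻¹ * B.toBlocks₁₂).det
      ≤ B.toBlocks₂₂.det := by
    have := det_le_det_add_psd hSpsd hPpsd
    rwa [sub_add_cancel] at this
  rw [hdet, invOf_eq_nonsing_inv]
  exact mul_le_mul_of_nonneg_left hle hA11.det_pos.le

lemma jacobi_two {B : Matrix (m ⊕ n) (m ⊕ n) ℝ} (hB : IsUnit B.det)
    (h22 : IsUnit B.toBlocks₂₂.det) :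
    (B⁻¹).toBlocks₁₁.det = B.toBlocks₂₂.det / B.det := by
  haveI iD : Invertible B.toBlocks₂₂ := B.toBlocks₂₂.invertibleOfIsUnitDet h22
  have hfb : B = fromBlocks B.toBlocks₁₁ B.toBlocks₁₂ B.toBlocks₂₁ B.toBlocks₂₂ :=
    (fromBlocks_toBlocks B).symm
  set S := B.toBlocks₁₁ - B.toBlocks₁₂ * ⅟B.toBlocks₂₂ * B.toBlocks₂₁ with hS
  have hdet : B.det = B.toBlocks₂₂.det * S.det := by
    conv_lhs => rw [hfb]
    rw [det_fromBlocks₂₂]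
  have hSdet : IsUnit S.det := by
    have h0 : B.det ≠ 0 := hB.ne_zero
    refine Ne.isUnit fun h => h0 ?_
    rw [hdet, h, mul_zero]
  haveI iS : Invertible S := S.invertibleOfIsUnitDet hSdet
  haveI iB' : Invertible (fromBlocks B.toBlocks₁₁ B.toBlocks₁₂ B.toBlocks₂₁ B.toBlocks₂₂) :=
    fromBlocks₂₂Invertible _ _ _ _
  haveI iB : Invertible B := B.invertibleOfIsUnitDet hB
  have h1 : B⁻¹ = ⅟(fromBlocks B.toBlocks₁₁ B.toBlocks₁₂ B.toBlocks₂₁ B.toBlocks₂₂) := by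
    rw [invOf_eq_nonsing_inv, ← hfb]
  have h2 := invOf_fromBlocks₂₂_eq B.toBlocks₁₁ B.toBlocks₁₂ B.toBlocks₂₁ B.toBlocks₂₂
  have h3 : (B⁻¹).toBlocks₁₁ = ⅟S := by
    rw [h1, h2]
    rfl
  haveI := S.detInvertibleOfInvertible
  rw [h3, det_invOf, invOf_eq_inv, hdet]
  have hD0 : B.toBlocks₂₂.det ≠ 0 := h22.ne_zero
  have hS0 : S.det ≠ 0 := hSdet.ne_zero
  field_simp

def sigmaBlockEquiv {K : Type} [DecidableEq K] (κ : K → Type) (k₀ : K) :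
    (κ k₀ ⊕ ((l : {l : K // l ≠ k₀}) × κ l.1)) ≃ ((k : K) × κ k) where
  toFun x := Sum.rec (fun j => ⟨k₀, j⟩) (fun p => ⟨p.1.1, p.2⟩) x
  invFun p := if h : p.1 = k₀ then Sum.inl (h ▸ p.2) else Sum.inr ⟨⟨p.1, h⟩, p.2⟩
  left_inv := by
    rintro (j | ⟨⟨l, hl⟩, j⟩)
    · simp
    · simp [hl]
  right_inv := by
    rintro ⟨l, j⟩
    by_cases h : l = k₀
    · subst h; simp
    · simp [h]

lemma prod_split {K : Type} [Fintype K] [DecidableEq K] (k₀ : K) (f : K → ℝ) :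
    ∏ k : K, f k = f k₀ * ∏ l : {l : K // l ≠ k₀}, f l.1 := by
  rw [← Finset.mul_prod_erase Finset.univ f (Finset.mem_univ k₀)]
  congr 1
  exact Finset.prod_subtype (Finset.univ.erase k₀) (fun x => by simp) f

lemma card_ne {K : Type} [Fintype K] [DecidableEq K] (k₀ : K) :
    Fintype.card {l : K // l ≠ k₀} = Fintype.card K - 1 := by
  have h := Fintype.card_subtype_compl (fun l : K => l = k₀)
  rw [Fintype.card_subtype_eq] at h
  exact h

lemma fischer_aux (N : ℕ) : ∀ {K : Type} [Fintype K] [DecidableEq K] (κ : K → Type)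
    [∀ k, Fintype (κ k)] [∀ k, DecidableEq (κ k)] (_ : Fintype.card K = N)
    (A : Matrix ((k : K) × κ k) ((k : K) × κ k) ℝ) (_ : A.PosDef),
    A.det ≤ ∏ k, (A.submatrix (Sigma.mk k) (Sigma.mk k)).det := by
  induction N with
  | zero =>
    intro K _ _ κ _ _ hN A hA
    haveI : IsEmpty K := Fintype.card_eq_zero_iff.mp hN
    haveI : IsEmpty ((k : K) × κ k) := ⟨fun p => IsEmpty.elim ‹IsEmpty K› p.1⟩
    simp [Matrix.det_isEmpty]
  | succ N ih =>
    intro K _ _ κ _ _ hN A hA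
    haveI : Nonempty K := Fintype.card_pos_iff.mp (by omega)
    set k₀ := Classical.arbitrary K
    set e := sigmaBlockEquiv κ k₀ with he
    set B := A.submatrix e e with hBdef
    have hBpd : B.PosDef := posDef_submatrix_of_injective hA e e.injective
    have hBdet : B.det = A.det := det_submatrix_equiv_self e A
    have h11 : B.toBlocks₁₁ = A.submatrix (Sigma.mk k₀) (Sigma.mk k₀) := rfl
    have hB22pd : B.toBlocks₂₂.PosDef := by
      rw [toBlocks22_eq]
      exact posDef_submatrix_of_injective hBpd _ Sum.inr_injective
    have hcard : Fintype.card {l : K // l ≠ k₀} = N := by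
      rw [card_ne, hN]; omega
    have hIH := ih (fun l : {l : K // l ≠ k₀} => κ l.1) hcard B.toBlocks₂₂ hB22pd
    have hblocks : ∀ l : {l : K // l ≠ k₀},
        (B.toBlocks₂₂).submatrix (Sigma.mk l) (Sigma.mk l)
          = A.submatrix (Sigma.mk l.1) (Sigma.mk l.1) := fun l => rfl
    rw [prod_split k₀ (fun k => (A.submatrix (Sigma.mk k) (Sigma.mk k)).det)]
    have h2 := fischer_two hBpd
    have hk0pos : 0 < (A.submatrix (Sigma.mk k₀) (Sigma.mk k₀)).det :=
      (posDef_submatrix_of_injective hA _ sigma_mk_injective).det_pos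
    calc A.det = B.det := hBdet.symm
      _ ≤ B.toBlocks₁₁.det * B.toBlocks₂₂.det := h2
      _ ≤ (A.submatrix (Sigma.mk k₀) (Sigma.mk k₀)).det
            * ∏ l : {l : K // l ≠ k₀}, (A.submatrix (Sigma.mk l.1) (Sigma.mk l.1)).det := by
          rw [h11]
          apply mul_le_mul_of_nonneg_left _ hk0pos.le
          calc B.toBlocks₂₂.det
              ≤ ∏ l : {l : K // l ≠ k₀},
                  ((B.toBlocks₂₂).submatrix (Sigma.mk l) (Sigma.mk l)).det := hIH
            _ = _ := by
                refine Finset.prod_congr rfl fun l _ => ?_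
                rw [hblocks l]
lemma key_lemma {K : Type} [Fintype K] [DecidableEq K] (κ : K → Type)
    [∀ k, Fintype (κ k)] [∀ k, DecidableEq (κ k)]
    (A : Matrix ((k : K) × κ k) ((k : K) × κ k) ℝ) (hA : A.PosDef)
    (h : A.det = ∏ k, (A.submatrix (Sigma.mk k) (Sigma.mk k)).det) :
    A⁻¹.det = ∏ k, (A⁻¹.submatrix (Sigma.mk k) (Sigma.mk k)).det := by
  have hAdet : IsUnit A.det := hA.det_pos.ne'.isUnit
  have hAinv : A⁻¹.PosDef := hA.inv
  have hAkk_pd : ∀ k, (A.submatrix (Sigma.mk k) (Sigma.mk k)).PosDef :=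
    fun k => posDef_submatrix_of_injective hA _ sigma_mk_injective
  have hinvdet : A⁻¹.det = A.det⁻¹ := by
    rw [det_nonsing_inv, Ring.inverse_eq_inv]
  have upper : A⁻¹.det ≤ ∏ k, (A⁻¹.submatrix (Sigma.mk k) (Sigma.mk k)).det :=
    fischer_aux (Fintype.card K) κ rfl A⁻¹ hAinv
  have per : ∀ k, (A⁻¹.submatrix (Sigma.mk k) (Sigma.mk k)).det
      ≤ ((A.submatrix (Sigma.mk k) (Sigma.mk k)).det)⁻¹ := by
    intro k
    set e := sigmaBlockEquiv κ k with he
    set B := A.submatrix e e with hBdef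
    have hBpd : B.PosDef := posDef_submatrix_of_injective hA e e.injective
    have hBdet : B.det = A.det := det_submatrix_equiv_self e A
    have hB22pd : B.toBlocks₂₂.PosDef := by
      rw [toBlocks22_eq]
      exact posDef_submatrix_of_injective hBpd _ Sum.inr_injective
    have hjac := jacobi_two (B := B) (hBdet ▸ hAdet) hB22pd.det_pos.ne'.isUnit
    have hBinv : B⁻¹ = A⁻¹.submatrix e e := inv_submatrix_equiv A e e
    have h11 : (B⁻¹).toBlocks₁₁ = A⁻¹.submatrix (Sigma.mk k) (Sigma.mk k) := by
      rw [hBinv]; rfl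
    have hF := fischer_aux (Fintype.card {l : K // l ≠ k})
      (fun l : {l : K // l ≠ k} => κ l.1) rfl B.toBlocks₂₂ hB22pd
    have hblocks : ∀ l : {l : K // l ≠ k},
        (B.toBlocks₂₂).submatrix (Sigma.mk l) (Sigma.mk l)
          = A.submatrix (Sigma.mk l.1) (Sigma.mk l.1) := fun l => rfl
    have hprod : ∏ l : {l : K // l ≠ k},
        (A.submatrix (Sigma.mk l.1) (Sigma.mk l.1)).det
          = A.det / (A.submatrix (Sigma.mk k) (Sigma.mk k)).det := by
      rw [eq_div_iff (hAkk_pd k).det_pos.ne', h,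
        prod_split k (fun k => (A.submatrix (Sigma.mk k) (Sigma.mk k)).det)]
      ring
    have hB22le : B.toBlocks₂₂.det ≤ A.det / (A.submatrix (Sigma.mk k) (Sigma.mk k)).det := by
      rw [← hprod]
      calc B.toBlocks₂₂.det
          ≤ ∏ l : {l : K // l ≠ k},
              ((B.toBlocks₂₂).submatrix (Sigma.mk l) (Sigma.mk l)).det := hF
        _ = _ := Finset.prod_congr rfl fun l _ => by rw [hblocks l]
    have hApos : 0 < A.det := hA.det_pos
    calc (A⁻¹.submatrix (Sigma.mk k) (Sigma.mk k)).det
        = B.toBlocks₂₂.det / B.det := by rw [← h11, hjac]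
      _ = B.toBlocks₂₂.det / A.det := by rw [hBdet]
      _ ≤ (A.det / (A.submatrix (Sigma.mk k) (Sigma.mk k)).det) / A.det := by
          gcongr
      _ = ((A.submatrix (Sigma.mk k) (Sigma.mk k)).det)⁻¹ := by
          rw [div_div, mul_comm, ← div_div, div_self hApos.ne', one_div]
  have lower : ∏ k, (A⁻¹.submatrix (Sigma.mk k) (Sigma.mk k)).det ≤ A⁻¹.det := by
    calc ∏ k, (A⁻¹.submatrix (Sigma.mk k) (Sigma.mk k)).det
        ≤ ∏ k, ((A.submatrix (Sigma.mk k) (Sigma.mk k)).det)⁻¹ := by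
          refine Finset.prod_le_prod (fun k _ => ?_) fun k _ => per k
          exact (posDef_submatrix_of_injective hAinv _ sigma_mk_injective).det_pos.le
      _ = (∏ k, (A.submatrix (Sigma.mk k) (Sigma.mk k)).det)⁻¹ := by
          rw [← Finset.prod_inv_distrib]
      _ = A.det⁻¹ := by rw [← h]
      _ = A⁻¹.det := hinvdet.symm
  exact le_antisymm upper lower
/-- For an invertible square `J` with inverse `G = J⁻¹` and a partition of the indices:
`det(Jᵀ J) = ∏ₖ det(Jₖᵀ Jₖ)` (column blocks of `J`) holds iff
`det(G Gᵀ) = ∏ₖ det(Gₖ Gₖᵀ)` (row blocks of `G`). -/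
theorem stmt11 {r : ℕ} {d : Fin r → ℕ}
    (J : Matrix ((i : Fin r) × Fin (d i)) ((i : Fin r) × Fin (d i)) ℝ)
    (hJ : IsUnit J.det) :
    ((Jᵀ * J).det
        = ∏ k : Fin r, ((J.submatrix id (Sigma.mk k))ᵀ * J.submatrix id (Sigma.mk k)).det)
      ↔ ((J⁻¹ * (J⁻¹)ᵀ).det
        = ∏ k : Fin r,
            (J⁻¹.submatrix (Sigma.mk k) id * (J⁻¹.submatrix (Sigma.mk k) id)ᵀ).det) := by
  have hJt : Jᴴ = Jᵀ := rfl
  have hApsd : (Jᵀ * J).PosSemidef := by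
    have := posSemidef_conjTranspose_mul_self J
    rwa [hJt] at this
  have hdetA : (Jᵀ * J).det = J.det * J.det := by rw [det_mul, det_transpose]
  have hA : (Jᵀ * J).PosDef := posDef_of_posSemidef_det_ne_zero hApsd
    (by rw [hdetA]; exact (hJ.mul hJ).ne_zero)
  have hAdet : IsUnit (Jᵀ * J).det := hA.det_pos.ne'.isUnit
  have hblockL : ∀ k, (Jᵀ * J).submatrix (Sigma.mk k) (Sigma.mk k)
      = (J.submatrix id (Sigma.mk k))ᵀ * J.submatrix id (Sigma.mk k) := by
    intro k; ext a b; simp [Matrix.mul_apply]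
  have hAinv_eq : (Jᵀ * J)⁻¹ = J⁻¹ * (J⁻¹)ᵀ := by
    rw [Matrix.mul_inv_rev, ← Matrix.transpose_nonsing_inv]
  have hblockR : ∀ k, ((Jᵀ * J)⁻¹).submatrix (Sigma.mk k) (Sigma.mk k)
      = J⁻¹.submatrix (Sigma.mk k) id * (J⁻¹.submatrix (Sigma.mk k) id)ᵀ := by
    intro k; rw [hAinv_eq]; ext a b; simp [Matrix.mul_apply]
  constructor
  · intro hL
    have h' : (Jᵀ * J).det
        = ∏ k, ((Jᵀ * J).submatrix (Sigma.mk k) (Sigma.mk k)).det := by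
      rw [hL]
      exact (Finset.prod_congr rfl fun k _ => by rw [hblockL k]).symm
    have hk := key_lemma (fun i : Fin r => Fin (d i)) (Jᵀ * J) hA h'
    rw [hAinv_eq] at hk
    rw [hk]
    refine Finset.prod_congr rfl fun k _ => ?_
    rw [← hAinv_eq, hblockR k]
  · intro hR
    have h' : ((Jᵀ * J)⁻¹).det
        = ∏ k, (((Jᵀ * J)⁻¹).submatrix (Sigma.mk k) (Sigma.mk k)).det := by
      rw [hAinv_eq, hR]
      exact (Finset.prod_congr rfl fun k _ => by rw [← hAinv_eq, hblockR k]).symm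
    have hk := key_lemma (fun i : Fin r => Fin (d i)) ((Jᵀ * J)⁻¹) hA.inv h'
    rw [nonsing_inv_nonsing_inv _ hAdet] at hk
    rw [hk]
    exact Finset.prod_congr rfl fun k _ => by rw [hblockL k]
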